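/- A groupoid G over an incidence pattern I is 2-acyclic if and only if for all inverse-closed generator subsets α₀, α₁ ⊆ E, the intersection of the generated subgroupoids satisfies G[α₀] ∩ G[α₁] = G[α₀ ∩ α₁]. -/

import Mathlib

/-- An incidence pattern: a directed multigraph with involutive edge reversal
(Definition 2.4 of the paper). -/
structure IncidencePattern where
  S : Type
  E : Type
  src : E → S
  tgt : E → S
  einv : E → E
  einv_einv : ∀ e, einv (einv e) = e
  src_einv : ∀ e, src (einv e) = tgt e

/-- `IsWalk I w s s'` : the list of links `w` is a walk from site `s` to site `s'` in `I`. -/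
def IsWalk (I : IncidencePattern) : List I.E → I.S → I.S → Prop
  | [], s, s' => s = s'
  | e :: w, s, s' => I.src e = s ∧ IsWalk I w (I.tgt e) s'

/-- A groupoid over an incidence pattern `I` (Definition 3.8), presented algebraically:
elements with source/target sites, composition `mul` (meaningful on composable pairs),
units, inverses, and designated generators `gen e` for the links of `I`. -/
structure GroupoidOver (I : IncidencePattern) where
  G : Type
  gsrc : G → I.S
  gtgt : G → I.S
  mul : G → G → G
  one : I.S → G
  ginv : G → G
  gen : I.E → G
  gsrc_mul : ∀ g h, gtgt g = gsrc h → gsrc (mul g h) = gsrc g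
  gtgt_mul : ∀ g h, gtgt g = gsrc h → gtgt (mul g h) = gtgt h
  mul_assoc : ∀ g h k, gtgt g = gsrc h → gtgt h = gsrc k →
      mul (mul g h) k = mul g (mul h k)
  gsrc_one : ∀ s, gsrc (one s) = s
  gtgt_one : ∀ s, gtgt (one s) = s
  one_mul : ∀ g, mul (one (gsrc g)) g = g
  mul_one : ∀ g, mul g (one (gtgt g)) = g
  gsrc_ginv : ∀ g, gsrc (ginv g) = gtgt g
  gtgt_ginv : ∀ g, gtgt (ginv g) = gsrc g
  mul_ginv : ∀ g, mul g (ginv g) = one (gsrc g)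
  ginv_mul : ∀ g, mul (ginv g) g = one (gtgt g)
  gsrc_gen : ∀ e, gsrc (gen e) = I.src e
  gtgt_gen : ∀ e, gtgt (gen e) = I.tgt e
  gen_einv : ∀ e, gen (I.einv e) = ginv (gen e)

/-- The product w^G of the generators along a walk `w` starting at site `s`. -/
def wprod {I : IncidencePattern} (Γ : GroupoidOver I) : I.S → List I.E → Γ.G
  | s, [] => Γ.one s
  | _, e :: w => Γ.mul (Γ.gen e) (wprod Γ (I.tgt e) w)

/-- The groupoid is generated by the links of `I` (Definition 3.8(iii)). -/
def IsGenerated {I : IncidencePattern} (Γ : GroupoidOver I) : Prop :=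
  ∀ g, ∃ w : List I.E, IsWalk I w (Γ.gsrc g) (Γ.gtgt g) ∧ g = wprod Γ (Γ.gsrc g) w

/-- A set of links closed under edge reversal (inversion of generators). -/
def InvClosed (I : IncidencePattern) (α : Set I.E) : Prop := ∀ e ∈ α, I.einv e ∈ α

/-- `genSet Γ α` = G[α] : the subgroupoid generated by the generators in α,
including the units as empty products (Definition 3.13). -/
def genSet {I : IncidencePattern} (Γ : GroupoidOver I) (α : Set I.E) : Set Γ.G :=
  { g | ∃ w : List I.E, (∀ e ∈ w, e ∈ α) ∧ IsWalk I w (Γ.gsrc g) (Γ.gtgt g) ∧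
        g = wprod Γ (Γ.gsrc g) w }

/-- The left coset g·G[α] (Definition 3.13). -/
def coset {I : IncidencePattern} (Γ : GroupoidOver I) (g : Γ.G) (α : Set I.E) : Set Γ.G :=
  { k | ∃ h ∈ genSet Γ α, Γ.gsrc h = Γ.gtgt g ∧ k = Γ.mul g h }

/-- A coset cycle of length `n` (Definition 3.14). -/
def IsCosetCycle {I : IncidencePattern} (Γ : GroupoidOver I) (n : ℕ)
    (g : ZMod n → Γ.G) (α : ZMod n → Set I.E) : Prop :=
  (∀ i, InvClosed I (α i)) ∧
  (∀ i, g (i + 1) ∈ coset Γ (g i) (α i)) ∧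
  (∀ i, coset Γ (g i) (α i ∩ α (i - 1)) ∩ coset Γ (g (i + 1)) (α i ∩ α (i + 1)) = ∅)

/-- N-acyclicity of a groupoid (Definition 3.15): no coset cycles of length 2 ≤ n ≤ N. -/
def NAcyclicG {I : IncidencePattern} (Γ : GroupoidOver I) (N : ℕ) : Prop :=
  ∀ n, 2 ≤ n → n ≤ N → ∀ (g : ZMod n → Γ.G) (α : ZMod n → Set I.E),
    ¬ IsCosetCycle Γ n g α

/-- Simplicity of a groupoid over `I` (Definition 3.9): the generators are pairwise
distinct and none of them is a unit. -/
def SimpleGroupoid {I : IncidencePattern} (Γ : GroupoidOver I) : Prop :=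
  Function.Injective Γ.gen ∧ ∀ (e : I.E) (s : I.S), Γ.gen e ≠ Γ.one s

section Aux

variable {I : IncidencePattern} (Γ : GroupoidOver I)

lemma ginv_unique (a b : Γ.G) (hsrc : Γ.gsrc b = Γ.gtgt a)
    (h : Γ.mul a b = Γ.one (Γ.gsrc a)) : b = Γ.ginv a := by
  calc b = Γ.mul (Γ.one (Γ.gsrc b)) b := (Γ.one_mul b).symm
    _ = Γ.mul (Γ.mul (Γ.ginv a) a) b := by rw [hsrc, ← Γ.ginv_mul a]
    _ = Γ.mul (Γ.ginv a) (Γ.mul a b) := Γ.mul_assoc _ _ _ (Γ.gtgt_ginv a) hsrc.symm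
    _ = Γ.mul (Γ.ginv a) (Γ.one (Γ.gsrc a)) := by rw [h]
    _ = Γ.ginv a := by rw [← Γ.gtgt_ginv a, Γ.mul_one]

lemma ginv_ginv (g : Γ.G) : Γ.ginv (Γ.ginv g) = g := by
  refine (ginv_unique Γ (Γ.ginv g) g (by rw [Γ.gtgt_ginv]) ?_).symm
  rw [Γ.ginv_mul, Γ.gsrc_ginv]

lemma ginv_one (s : I.S) : Γ.ginv (Γ.one s) = Γ.one s := by
  refine (ginv_unique Γ (Γ.one s) (Γ.one s) (by rw [Γ.gsrc_one, Γ.gtgt_one]) ?_).symm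
  have h := Γ.one_mul (Γ.one s)
  rw [Γ.gsrc_one] at h
  rw [h, Γ.gsrc_one]

lemma ginv_mul_rev (g h : Γ.G) (hc : Γ.gtgt g = Γ.gsrc h) :
    Γ.ginv (Γ.mul g h) = Γ.mul (Γ.ginv h) (Γ.ginv g) := by
  have hsg : Γ.gtgt (Γ.ginv h) = Γ.gsrc (Γ.ginv g) := by
    rw [Γ.gtgt_ginv, Γ.gsrc_ginv, hc]
  refine (ginv_unique Γ _ _ ?_ ?_).symm
  · rw [Γ.gsrc_mul _ _ hsg, Γ.gsrc_ginv, Γ.gtgt_mul _ _ hc]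
  · have h1 : Γ.mul h (Γ.mul (Γ.ginv h) (Γ.ginv g)) = Γ.ginv g := by
      rw [← Γ.mul_assoc _ _ _ (Γ.gsrc_ginv h).symm hsg, Γ.mul_ginv]
      rw [← hc, ← Γ.gsrc_ginv g, Γ.one_mul]
    have h2 : Γ.gtgt h = Γ.gsrc (Γ.mul (Γ.ginv h) (Γ.ginv g)) := by
      rw [Γ.gsrc_mul _ _ hsg, Γ.gsrc_ginv]
    rw [Γ.mul_assoc _ _ _ hc h2, h1, Γ.mul_ginv, Γ.gsrc_mul _ _ hc]

lemma wprod_src : ∀ (w : List I.E) (s t : I.S), IsWalk I w s t →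
    Γ.gsrc (wprod Γ s w) = s ∧ Γ.gtgt (wprod Γ s w) = t
  | [], s, t, h => by
      simp only [IsWalk] at h
      exact ⟨Γ.gsrc_one s, h ▸ Γ.gtgt_one s⟩
  | e :: w, s, t, h => by
      obtain ⟨he, hw⟩ := h
      obtain ⟨ih1, ih2⟩ := wprod_src w (I.tgt e) t hw
      have hc : Γ.gtgt (Γ.gen e) = Γ.gsrc (wprod Γ (I.tgt e) w) := by
        rw [Γ.gtgt_gen, ih1]
      exact ⟨by rw [wprod, Γ.gsrc_mul _ _ hc, Γ.gsrc_gen, he],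
             by rw [wprod, Γ.gtgt_mul _ _ hc, ih2]⟩

lemma isWalk_append : ∀ (w₁ w₂ : List I.E) (s t u : I.S),
    IsWalk I w₁ s t → IsWalk I w₂ t u → IsWalk I (w₁ ++ w₂) s u
  | [], w₂, s, t, u, h1, h2 => by simp only [IsWalk] at h1; subst h1; exact h2
  | e :: w₁, w₂, s, t, u, h1, h2 =>
      ⟨h1.1, isWalk_append w₁ w₂ (I.tgt e) t u h1.2 h2⟩

lemma wprod_append : ∀ (w₁ w₂ : List I.E) (s t u : I.S),
    IsWalk I w₁ s t → IsWalk I w₂ t u →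
    wprod Γ s (w₁ ++ w₂) = Γ.mul (wprod Γ s w₁) (wprod Γ t w₂)
  | [], w₂, s, t, u, h1, h2 => by
      simp only [IsWalk] at h1; subst h1
      have h := Γ.one_mul (wprod Γ s w₂)
      rw [(wprod_src Γ w₂ s u h2).1] at h
      simpa [wprod] using h.symm
  | e :: w₁, w₂, s, t, u, h1, h2 => by
      have ih := wprod_append w₁ w₂ (I.tgt e) t u h1.2 h2
      have hw1 := wprod_src Γ w₁ (I.tgt e) t h1.2
      have hw2 := wprod_src Γ w₂ t u h2
      show Γ.mul (Γ.gen e) (wprod Γ (I.tgt e) (w₁ ++ w₂)) = _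
      rw [ih, ← Γ.mul_assoc _ _ _ (by rw [Γ.gtgt_gen, hw1.1]) (by rw [hw1.2, hw2.1])]
      rfl

lemma wprod_rev : ∀ (w : List I.E) (s t : I.S), IsWalk I w s t →
    IsWalk I ((w.map I.einv).reverse) t s ∧
      wprod Γ t ((w.map I.einv).reverse) = Γ.ginv (wprod Γ s w)
  | [], s, t, h => by
      simp only [IsWalk] at h; subst h
      exact ⟨rfl, (ginv_one Γ s).symm⟩
  | e :: w, s, t, h => by
      obtain ⟨he, hw⟩ := h
      obtain ⟨ih1, ih2⟩ := wprod_rev w (I.tgt e) t hw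
      have htei : I.tgt (I.einv e) = s := by
        rw [← he, ← I.src_einv (I.einv e), I.einv_einv]
      have hwalk1 : IsWalk I [I.einv e] (I.tgt e) s := ⟨I.src_einv e, htei⟩
      have hrw : ((e :: w).map I.einv).reverse = (w.map I.einv).reverse ++ [I.einv e] := by
        simp
      constructor
      · rw [hrw]; exact isWalk_append (w.map I.einv).reverse [I.einv e] t (I.tgt e) s ih1 hwalk1
      · rw [hrw, wprod_append Γ _ _ t (I.tgt e) s ih1 hwalk1, ih2]
        have hone : wprod Γ (I.tgt e) [I.einv e] = Γ.ginv (Γ.gen e) := by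
          show Γ.mul (Γ.gen (I.einv e)) (Γ.one (I.tgt (I.einv e))) = _
          rw [← Γ.gtgt_gen (I.einv e), Γ.mul_one, Γ.gen_einv]
        rw [hone]
        have hc : Γ.gtgt (Γ.gen e) = Γ.gsrc (wprod Γ (I.tgt e) w) := by
          rw [Γ.gtgt_gen, (wprod_src Γ w (I.tgt e) t hw).1]
        exact (ginv_mul_rev Γ _ _ hc).symm

lemma one_mem_genSet (s : I.S) (α : Set I.E) : Γ.one s ∈ genSet Γ α := by
  refine ⟨[], by simp, ?_, ?_⟩
  · show Γ.gsrc (Γ.one s) = Γ.gtgt (Γ.one s)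
    rw [Γ.gsrc_one, Γ.gtgt_one]
  · show Γ.one s = Γ.one (Γ.gsrc (Γ.one s))
    rw [Γ.gsrc_one]

lemma genSet_mul {α : Set I.E} {g h : Γ.G} (hg : g ∈ genSet Γ α) (hh : h ∈ genSet Γ α)
    (hc : Γ.gtgt g = Γ.gsrc h) : Γ.mul g h ∈ genSet Γ α := by
  obtain ⟨w₁, hw₁α, hw₁, hw₁e⟩ := hg
  obtain ⟨w₂, hw₂α, hw₂, hw₂e⟩ := hh
  rw [← hc] at hw₂
  refine ⟨w₁ ++ w₂, ?_, ?_, ?_⟩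
  · intro e he
    rcases List.mem_append.mp he with h' | h'
    · exact hw₁α e h'
    · exact hw₂α e h'
  · rw [Γ.gsrc_mul _ _ hc, Γ.gtgt_mul _ _ hc]
    exact isWalk_append w₁ w₂ _ _ _ hw₁ hw₂
  · rw [Γ.gsrc_mul _ _ hc,
      wprod_append Γ w₁ w₂ (Γ.gsrc g) (Γ.gtgt g) (Γ.gtgt h) hw₁ hw₂,
      ← hw₁e]
    congr 1
    rw [hc, ← hw₂e]

lemma genSet_inv {α : Set I.E} (hα : InvClosed I α) {g : Γ.G} (hg : g ∈ genSet Γ α) :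
    Γ.ginv g ∈ genSet Γ α := by
  obtain ⟨w, hwα, hw, hwe⟩ := hg
  obtain ⟨hw', he'⟩ := wprod_rev Γ w (Γ.gsrc g) (Γ.gtgt g) hw
  refine ⟨(w.map I.einv).reverse, ?_, ?_, ?_⟩
  · intro e he
    rw [List.mem_reverse, List.mem_map] at he
    obtain ⟨e', he', rfl⟩ := he
    exact hα e' (hwα e' he')
  · rw [Γ.gsrc_ginv, Γ.gtgt_ginv]; exact hw'
  · rw [Γ.gsrc_ginv, he', ← hwe]

lemma self_mem_coset (g : Γ.G) (α : Set I.E) : g ∈ coset Γ g α :=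
  ⟨Γ.one (Γ.gtgt g), one_mem_genSet Γ _ _, Γ.gsrc_one _, (Γ.mul_one g).symm⟩

lemma mem_coset_one {g : Γ.G} {α : Set I.E} (hg : g ∈ genSet Γ α) :
    g ∈ coset Γ (Γ.one (Γ.gsrc g)) α :=
  ⟨g, hg, (Γ.gtgt_one _).symm, (Γ.one_mul g).symm⟩

lemma coset_one_disjoint {h : Γ.G} {β : Set I.E} (hβ : InvClosed I β)
    (hn : h ∉ genSet Γ β) :
    coset Γ (Γ.one (Γ.gsrc h)) β ∩ coset Γ h β = ∅ := by
  by_contra hne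
  obtain ⟨k, ⟨a, ha, hasrc, hka⟩, ⟨b, hb, hbsrc, hkb⟩⟩ :=
    Set.nonempty_iff_ne_empty.mpr hne
  rw [Γ.gtgt_one] at hasrc
  have hka' : k = a := by
    rw [hka, ← hasrc, Γ.one_mul]
  have hkey : Γ.mul k (Γ.ginv b) = h := by
    rw [hkb, Γ.mul_assoc _ _ _ hbsrc.symm (Γ.gsrc_ginv b).symm, Γ.mul_ginv,
      hbsrc, Γ.mul_one]
  apply hn
  rw [← hkey, hka']
  refine genSet_mul Γ ha (genSet_inv Γ hβ hb) ?_
  rw [Γ.gsrc_ginv, ← hka', hkb, Γ.gtgt_mul _ _ hbsrc.symm]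

lemma eq_one_of_mul_self (a x : Γ.G) (hx : Γ.gsrc x = Γ.gtgt a)
    (h : Γ.mul a x = a) : x = Γ.one (Γ.gtgt a) := by
  calc x = Γ.mul (Γ.one (Γ.gsrc x)) x := (Γ.one_mul x).symm
    _ = Γ.mul (Γ.mul (Γ.ginv a) a) x := by rw [hx, ← Γ.ginv_mul a]
    _ = Γ.mul (Γ.ginv a) (Γ.mul a x) := Γ.mul_assoc _ _ _ (Γ.gtgt_ginv a) hx.symm
    _ = Γ.mul (Γ.ginv a) a := by rw [h]
    _ = Γ.one (Γ.gtgt a) := Γ.ginv_mul a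

end Aux

/-- Observation 3.16: A groupoid G over an incidence pattern I is
2-acyclic if and only if for all inverse-closed generator subsets α₀, α₁ ⊆ E,
G[α₀] ∩ G[α₁] = G[α₀ ∩ α₁]. -/
theorem stmt8 {I : IncidencePattern} (Γ : GroupoidOver I) (hgen : IsGenerated Γ) :
    NAcyclicG Γ 2 ↔
      ∀ α₀ α₁ : Set I.E, InvClosed I α₀ → InvClosed I α₁ →
        genSet Γ α₀ ∩ genSet Γ α₁ = genSet Γ (α₀ ∩ α₁) := by
  have e01 : (0 : ZMod 2) + 1 = 1 := by decide
  have e11 : (1 : ZMod 2) + 1 = 0 := by decide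
  have e0m : (0 : ZMod 2) - 1 = 1 := by decide
  have e1m : (1 : ZMod 2) - 1 = 0 := by decide
  have hz : ∀ i : ZMod 2, i = 0 ∨ i = 1 := by decide
  constructor
  · intro hac α₀ α₁ hα₀ hα₁
    have hβinv : InvClosed I (α₀ ∩ α₁) := fun e he => ⟨hα₀ e he.1, hα₁ e he.2⟩
    ext x
    constructor
    · rintro ⟨hx0, hx1⟩
      by_contra hn
      set gf : ZMod 2 → Γ.G := fun i => if i = 0 then Γ.one (Γ.gsrc x) else x with hgf
      set af : ZMod 2 → Set I.E := fun i => if i = 0 then α₀ else α₁ with haf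
      have hg0 : gf 0 = Γ.one (Γ.gsrc x) := if_pos rfl
      have hg1 : gf 1 = x := if_neg (by decide)
      have ha0 : af 0 = α₀ := if_pos rfl
      have ha1 : af 1 = α₁ := if_neg (by decide)
      refine hac 2 le_rfl le_rfl gf af ⟨?_, ?_, ?_⟩
      · intro i
        rcases hz i with rfl | rfl
        · rw [ha0]; exact hα₀
        · rw [ha1]; exact hα₁
      · intro i
        rcases hz i with rfl | rfl
        · rw [e01, hg0, hg1, ha0]
          exact mem_coset_one Γ hx0
        · rw [e11, hg0, hg1, ha1]
          exact ⟨Γ.ginv x, genSet_inv Γ hα₁ hx1, Γ.gsrc_ginv x, (Γ.mul_ginv x).symm⟩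
      · intro i
        rcases hz i with rfl | rfl
        · rw [e01, e0m, hg0, hg1, ha0, ha1]
          exact coset_one_disjoint Γ hβinv hn
        · rw [e11, e1m, hg0, hg1, ha0, ha1, Set.inter_comm α₁ α₀, Set.inter_comm]
          exact coset_one_disjoint Γ hβinv hn
    · rintro ⟨w, hw, h2, h3⟩
      exact ⟨⟨w, fun e he => (hw e he).1, h2, h3⟩, ⟨w, fun e he => (hw e he).2, h2, h3⟩⟩
  · intro heq n hn2 hn2'
    have : n = 2 := le_antisymm hn2' hn2
    subst this
    rintro g α ⟨hinv, hmem, hdisj⟩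
    have hm0 := hmem 0
    rw [e01] at hm0
    obtain ⟨h0, h0m, h0s, h0e⟩ := hm0
    have hm1 := hmem 1
    rw [e11] at hm1
    obtain ⟨h1, h1m, h1s, h1e⟩ := hm1
    have hth : Γ.gtgt h0 = Γ.gsrc h1 := by
      rw [h1s, h0e, Γ.gtgt_mul _ _ h0s.symm]
    have hsx : Γ.gsrc (Γ.mul h0 h1) = Γ.gtgt (g 0) := by
      rw [Γ.gsrc_mul _ _ hth, h0s]
    have hx : Γ.mul (g 0) (Γ.mul h0 h1) = g 0 := by
      rw [← Γ.mul_assoc _ _ _ h0s.symm hth, ← h0e]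
      exact h1e.symm
    have key : Γ.mul h0 h1 = Γ.one (Γ.gtgt (g 0)) :=
      eq_one_of_mul_self Γ (g 0) (Γ.mul h0 h1) hsx hx
    have hinv01 : h1 = Γ.ginv h0 := by
      refine ginv_unique Γ h0 h1 hth.symm ?_
      rw [key, h0s]
    have h0in1 : h0 ∈ genSet Γ (α 1) := by
      have := genSet_inv Γ (hinv 1) h1m
      rwa [hinv01, ginv_ginv] at this
    have h0in : h0 ∈ genSet Γ (α 0 ∩ α 1) := by
      rw [← heq (α 0) (α 1) (hinv 0) (hinv 1)]
      exact ⟨h0m, h0in1⟩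
    have hd := hdisj 0
    rw [e01, e0m] at hd
    have hg1 : g 1 ∈ coset Γ (g 0) (α 0 ∩ α 1) ∩ coset Γ (g 1) (α 0 ∩ α 1) :=
      ⟨⟨h0, h0in, h0s, h0e⟩, self_mem_coset Γ (g 1) _⟩
    rw [hd] at hg1
    exact hg1
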